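/- Let $\lambda > 0$, $0 < \beta < 1$, and let $f \in W^{1,1}((t_j,t_{j+1}))$, $\upsilon \in \mathbb{R}$. Suppose $|E_{\beta,\beta}(-z)| \le C_E$ and $|E_{\beta,1}(-z)| \le C_E$ for all $z \ge 0$, and $\sup_{s}(s-t_j)^{\beta+\varepsilon}|f'(s)| =: M < \infty$ for some $\varepsilon \in (0,1-\beta)$. Then the solution $v$ of the constant-order fractional relaxation problem (given by the Mittag–Leffler representation) satisfies the pointwise derivative bound $|v'(t)| \le C_E\big( (|f(t_j)| + \lambda|\upsilon|)\,(t-t_j)^{\beta-1} + M\,\mathcal{B}(1-\beta-\varepsilon,\beta)\,(t-t_j)^{-\varepsilon} \big)$ for a.e. $t \in (t_j, t_{j+1})$; in particular $v' \in L^1((t_j,t_{j+1}))$. -/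

import Mathlib

open MeasureTheory Real intervalIntegral Filter

/-- The two-parameter Mittag–Leffler function `E_{α,β}(z) = ∑ₖ zᵏ/Γ(αk+β)`. -/
noncomputable def mittagLeffler (α β z : ℝ) : ℝ :=
  ∑' k : ℕ, z ^ k / Real.Gamma (α * k + β)

/-- The Beta function `B(r₁,r₂) = ∫₀¹ s^{r₁-1} (1-s)^{r₂-1} ds`. -/
noncomputable def betaFn (r₁ r₂ : ℝ) : ℝ :=
  ∫ s in (0:ℝ)..1, s ^ (r₁ - 1) * (1 - s) ^ (r₂ - 1)

lemma gamma_growth {α x : ℝ} (hα0 : 0 < α) (hα1 : α ≤ 1) (hx : 1 ≤ x) :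
    Real.Gamma x * x ^ α ≤ 2 * Real.Gamma (x + α) := by
  have hx0 : 0 < x := lt_of_lt_of_le one_pos hx
  have hxa : 0 < x + α := by linarith
  have hΓx : 0 < Real.Gamma x := Real.Gamma_pos_of_pos hx0
  have hΓxa : 0 < Real.Gamma (x + α) := Real.Gamma_pos_of_pos hxa
  have hconv := Real.convexOn_log_Gamma.2 (Set.mem_Ioi.mpr hxa)
    (Set.mem_Ioi.mpr (by linarith : (0:ℝ) < x + 1 + α)) hα0.le (by linarith : (0:ℝ) ≤ 1 - α)
    (by ring)
  have harg : α • (x + α) + (1 - α) • (x + 1 + α) = x + 1 := by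
    simp only [smul_eq_mul]; ring
  rw [harg] at hconv
  simp only [Function.comp_apply, smul_eq_mul] at hconv
  have hrec : Real.Gamma (x + 1 + α) = (x + α) * Real.Gamma (x + α) := by
    have := Real.Gamma_add_one (ne_of_gt hxa)
    rw [show x + 1 + α = x + α + 1 by ring, this]
  rw [hrec, Real.log_mul (ne_of_gt hxa) (ne_of_gt hΓxa)] at hconv
  have hlog : Real.log (Real.Gamma (x + 1))
      ≤ Real.log (Real.Gamma (x + α) * (x + α) ^ (1 - α)) := by
    rw [Real.log_mul (ne_of_gt hΓxa) (ne_of_gt (Real.rpow_pos_of_pos hxa _)),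
      Real.log_rpow hxa]
    nlinarith
  have h1 : Real.Gamma (x + 1) ≤ Real.Gamma (x + α) * (x + α) ^ (1 - α) := by
    have := Real.exp_le_exp.mpr hlog
    rwa [Real.exp_log (Real.Gamma_pos_of_pos (by linarith)),
      Real.exp_log (by positivity)] at this
  rw [Real.Gamma_add_one (ne_of_gt hx0)] at h1
  have h2 : (x + α) ^ (1 - α) ≤ 2 * x ^ (1 - α) := by
    calc (x + α) ^ (1 - α) ≤ (2 * x) ^ (1 - α) :=
          Real.rpow_le_rpow hxa.le (by linarith) (by linarith)
      _ = 2 ^ (1 - α) * x ^ (1 - α) := Real.mul_rpow (by norm_num) hx0.le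
      _ ≤ 2 * x ^ (1 - α) := by
          have h4 : (2:ℝ) ^ (1 - α) ≤ 2 ^ (1:ℝ) :=
            Real.rpow_le_rpow_of_exponent_le (by norm_num) (by linarith)
          rw [Real.rpow_one] at h4
          have := Real.rpow_nonneg hx0.le (1 - α)
          nlinarith
  have h3 : x * Real.Gamma x ≤ Real.Gamma (x + α) * (2 * x ^ (1 - α)) :=
    h1.trans (mul_le_mul_of_nonneg_left h2 hΓxa.le)
  have hsplit : x = x ^ α * x ^ (1 - α) := by
    rw [← Real.rpow_add hx0, show α + (1 - α) = 1 by ring, Real.rpow_one]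
  have hxpow : 0 < x ^ (1 - α) := Real.rpow_pos_of_pos hx0 _
  nlinarith [mul_pos hΓx (Real.rpow_pos_of_pos hx0 α)]

lemma summable_ml {α γ : ℝ} (hα0 : 0 < α) (hα1 : α ≤ 1) (hγ : 0 < γ) (z : ℝ) :
    Summable fun k : ℕ => z ^ k / Real.Gamma (α * k + γ) := by
  apply summable_of_ratio_norm_eventually_le (r := 1/2) (by norm_num)
  set R : ℝ := max 1 ((4 * |z| + 1) ^ (α⁻¹)) with hR
  have hR1 : 1 ≤ R := le_max_left _ _
  obtain ⟨N, hN⟩ : ∃ N : ℕ, R / α ≤ N := exists_nat_ge _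
  filter_upwards [eventually_ge_atTop N] with k hk
  have hkN : (N : ℝ) ≤ k := Nat.cast_le.mpr hk
  set x : ℝ := α * k + γ with hxdef
  have hxR : R ≤ x := by
    have : R ≤ α * N := by
      rw [div_le_iff₀ hα0] at hN; nlinarith
    nlinarith
  have hx1 : 1 ≤ x := le_trans hR1 hxR
  have hx0 : 0 < x := by linarith
  have hxa : 0 < x + α := by linarith
  have hΓx : 0 < Real.Gamma x := Real.Gamma_pos_of_pos hx0
  have hΓxa : 0 < Real.Gamma (x + α) := Real.Gamma_pos_of_pos hxa
  have hx4 : 4 * |z| ≤ x ^ α := by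
    have h1 : (4 * |z| + 1) ^ (α⁻¹) ≤ x := le_trans (le_max_right _ _) hxR
    have h2 : ((4 * |z| + 1) ^ (α⁻¹)) ^ α ≤ x ^ α :=
      Real.rpow_le_rpow (Real.rpow_nonneg (by positivity) _) h1 hα0.le
    rw [Real.rpow_inv_rpow (by positivity) (ne_of_gt hα0)] at h2
    linarith
  have hkey : 4 * |z| * Real.Gamma x ≤ 2 * Real.Gamma (x + α) := by
    calc 4 * |z| * Real.Gamma x ≤ x ^ α * Real.Gamma x :=
          mul_le_mul_of_nonneg_right hx4 hΓx.le
      _ = Real.Gamma x * x ^ α := by ring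
      _ ≤ 2 * Real.Gamma (x + α) := gamma_growth hα0 hα1 hx1
  have hidx : α * ((k + 1 : ℕ) : ℝ) + γ = x + α := by push_cast; ring
  rw [hidx]
  have habs : ∀ y : ℝ, 0 < y → ∀ n : ℕ, ‖z ^ n / y‖ = |z| ^ n / y := by
    intro y hy n
    rw [Real.norm_eq_abs, abs_div, abs_pow, abs_of_pos hy]
  rw [habs _ hΓxa, habs _ hΓx]
  rw [show (1:ℝ)/2 * (|z| ^ k / Real.Gamma x) = |z| ^ k / (2 * Real.Gamma x) by ring,
    div_le_div_iff₀ hΓxa (by positivity)]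
  have hzk : (0:ℝ) ≤ |z| ^ k := pow_nonneg (abs_nonneg z) k
  have hsucc : |z| ^ (k + 1) = |z| ^ k * |z| := pow_succ _ _
  nlinarith [mul_le_mul_of_nonneg_left hkey hzk]

lemma measurable_ml {α γ : ℝ} (hα0 : 0 < α) (hα1 : α ≤ 1) (hγ : 0 < γ) :
    Measurable (mittagLeffler α γ) := by
  have h : ∀ z : ℝ, Tendsto (fun n => ∑ k ∈ Finset.range n, z ^ k / Real.Gamma (α * k + γ))
      atTop (nhds (mittagLeffler α γ z)) := fun z =>
    (summable_ml hα0 hα1 hγ z).hasSum.tendsto_sum_nat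
  refine measurable_of_tendsto_metrizable (fun n => ?_) (tendsto_pi_nhds.mpr h)
  exact Finset.measurable_sum _ fun k _ => (measurable_id.pow_const k).div_const _

lemma intervalIntegrable_beta {a b p q : ℝ} (hab : a < b) (hp : -1 < p) (hq : -1 < q) :
    IntervalIntegrable (fun r => (r - a) ^ p * (b - r) ^ q) volume a b := by
  set m : ℝ := (a + b) / 2 with hm
  have ham : a < m := by rw [hm]; linarith
  have hmb : m < b := by rw [hm]; linarith
  refine IntervalIntegrable.trans (b := m) ?_ ?_
  · have h1 : IntervalIntegrable (fun r => (r - a) ^ p) volume a m := by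
      have := (intervalIntegrable_rpow' hp (a := 0) (b := m - a)).comp_sub_right a
      simpa using this
    refine h1.mul_continuousOn ?_
    refine ContinuousOn.rpow_const (by fun_prop) fun x hx => Or.inl ?_
    rw [Set.uIcc_of_le ham.le] at hx
    have : x ≤ m := hx.2
    intro h; rw [sub_eq_zero] at h; linarith
  · have h1 : IntervalIntegrable (fun r => (b - r) ^ q) volume m b := by
      have := (intervalIntegrable_rpow' hq (a := b - m) (b := 0)).comp_sub_left b
      simpa using this
    refine h1.continuousOn_mul ?_
    refine ContinuousOn.rpow_const (by fun_prop) fun x hx => Or.inl ?_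
    rw [Set.uIcc_of_le hmb.le] at hx
    have : m ≤ x := hx.1
    intro h; rw [sub_eq_zero] at h; linarith

lemma integral_beta_eval {a b p q : ℝ} (hab : a < b) :
    ∫ r in a..b, (r - a) ^ p * (b - r) ^ q
      = (b - a) ^ (p + q + 1) * ∫ u in (0:ℝ)..1, u ^ p * (1 - u) ^ q := by
  have hc : (0:ℝ) < b - a := sub_pos.mpr hab
  have key := intervalIntegral.integral_comp_mul_add
    (a := (0:ℝ)) (b := 1) (fun r => (r - a) ^ p * (b - r) ^ q) (ne_of_gt hc) a
  simp only [mul_zero, zero_add, mul_one, sub_add_cancel] at key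
  have key2 : ∫ r in a..b, (r - a) ^ p * (b - r) ^ q
      = (b - a) * ∫ u in (0:ℝ)..1, ((b - a) * u + a - a) ^ p * (b - ((b - a) * u + a)) ^ q := by
    rw [key, smul_eq_mul, ← mul_assoc, mul_inv_cancel₀ (ne_of_gt hc), one_mul]
  rw [key2]
  have hcong : ∫ u in (0:ℝ)..1, ((b - a) * u + a - a) ^ p * (b - ((b - a) * u + a)) ^ q
      = ∫ u in (0:ℝ)..1, ((b - a) ^ p * (b - a) ^ q) * (u ^ p * (1 - u) ^ q) := by
    refine intervalIntegral.integral_congr fun u hu => ?_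
    rw [Set.uIcc_of_le (by norm_num : (0:ℝ) ≤ 1)] at hu
    have hu0 : 0 ≤ u := hu.1
    have hu1 : 0 ≤ 1 - u := by linarith [hu.2]
    have e1 : (b - a) * u + a - a = (b - a) * u := by ring
    have e2 : b - ((b - a) * u + a) = (b - a) * (1 - u) := by ring
    rw [e1, e2, Real.mul_rpow hc.le hu0, Real.mul_rpow hc.le hu1]
    ring
  rw [hcong, intervalIntegral.integral_const_mul, ← mul_assoc]
  congr 1
  rw [show p + q + 1 = 1 + (p + q) by ring, Real.rpow_add hc, Real.rpow_one,
    Real.rpow_add hc]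

/-- Pointwise bound on the derivative of the Mittag–Leffler solution of the
constant-order fractional relaxation problem, and its `L¹` integrability. -/
theorem mittagLeffler_solution_deriv_bound
    (lam β ε tj tj1 υ C_E M : ℝ)
    (hlam : 0 < lam) (hβ0 : 0 < β) (hβ1 : β < 1)
    (hε0 : 0 < ε) (hε1 : ε < 1 - β) (ht : tj < tj1)
    (hCEββ : ∀ z : ℝ, 0 ≤ z → |mittagLeffler β β (-z)| ≤ C_E)
    (hCEβ1 : ∀ z : ℝ, 0 ≤ z → |mittagLeffler β 1 (-z)| ≤ C_E)
    (f f' : ℝ → ℝ)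
    (hf' : IntervalIntegrable f' volume tj tj1)
    (hf : ∀ x ∈ Set.Icc tj tj1, f x = f tj + ∫ s in tj..x, f' s)
    (hM : ∀ s ∈ Set.Ioo tj tj1, (s - tj) ^ (β + ε) * |f' s| ≤ M)
    (v' : ℝ → ℝ)
    (hv' : ∀ s ∈ Set.Ioo tj tj1,
      v' s = (f tj - lam * υ) * (s - tj) ^ (β - 1)
          * mittagLeffler β β (-lam * (s - tj) ^ β)
        + ∫ r in tj..s, (s - r) ^ (β - 1)
            * mittagLeffler β β (-lam * (s - r) ^ β) * f' r) :
    (∀ s ∈ Set.Ioo tj tj1,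
      |v' s| ≤ C_E * ((|f tj| + lam * |υ|) * (s - tj) ^ (β - 1)
        + M * betaFn (1 - β - ε) β * (s - tj) ^ (-ε))) ∧
    IntervalIntegrable v' volume tj tj1 := by
  have hCE : 0 ≤ C_E := le_trans (abs_nonneg _) (hCEββ 0 le_rfl)
  have hM0 : 0 ≤ M := by
    refine le_trans ?_ (hM ((tj + tj1) / 2) ⟨by linarith, by linarith⟩)
    exact mul_nonneg (Real.rpow_nonneg (by linarith) _) (abs_nonneg _)
  have hB0 : 0 ≤ betaFn (1 - β - ε) β := by
    unfold betaFn
    apply intervalIntegral.integral_nonneg (by norm_num)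
    intro u hu
    have hu0 : 0 ≤ u := hu.1
    have hu1 : 0 ≤ 1 - u := by linarith [hu.2]
    positivity
  have hBeq : betaFn (1 - β - ε) β = ∫ u in (0:ℝ)..1, u ^ (-(β + ε)) * (1 - u) ^ (β - 1) := by
    unfold betaFn
    simp only [show (1 - β - ε - 1 : ℝ) = -(β + ε) by ring]
  -- Part 1: pointwise bound
  have key : ∀ s ∈ Set.Ioo tj tj1,
      |v' s| ≤ C_E * ((|f tj| + lam * |υ|) * (s - tj) ^ (β - 1)
        + M * betaFn (1 - β - ε) β * (s - tj) ^ (-ε)) := by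
    intro s hs
    obtain ⟨hs1, hs2⟩ := hs
    have hc : 0 < s - tj := by linarith
    have hT1 : |(f tj - lam * υ) * (s - tj) ^ (β - 1)
        * mittagLeffler β β (-lam * (s - tj) ^ β)|
        ≤ (|f tj| + lam * |υ|) * (s - tj) ^ (β - 1) * C_E := by
      rw [abs_mul, abs_mul, abs_of_nonneg (Real.rpow_nonneg hc.le (β - 1))]
      have h1 : |f tj - lam * υ| ≤ |f tj| + lam * |υ| := by
        calc |f tj - lam * υ| ≤ |f tj| + |lam * υ| := abs_sub _ _
          _ = |f tj| + lam * |υ| := by rw [abs_mul, abs_of_pos hlam]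
      have h3 : |mittagLeffler β β (-lam * (s - tj) ^ β)| ≤ C_E := by
        rw [show -lam * (s - tj) ^ β = -(lam * (s - tj) ^ β) by ring]
        exact hCEββ _ (by positivity)
      have hr : 0 ≤ (s - tj) ^ (β - 1) := Real.rpow_nonneg hc.le _
      refine mul_le_mul (mul_le_mul_of_nonneg_right h1 hr) h3 (abs_nonneg _) ?_
      have : 0 ≤ |f tj| + lam * |υ| := by positivity
      positivity
    have hptwise : ∀ᵐ r ∂(volume.restrict (Set.uIoc tj s)),
        ‖(s - r) ^ (β - 1) * mittagLeffler β β (-lam * (s - r) ^ β) * f' r‖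
          ≤ (C_E * M) * ((r - tj) ^ (-(β + ε)) * (s - r) ^ (β - 1)) := by
      rw [Set.uIoc_of_le hs1.le]
      refine (ae_restrict_mem measurableSet_Ioc).mono fun r hr => ?_
      obtain ⟨hr1, hr2⟩ := hr
      by_cases hrs : r = s
      · subst hrs
        simp [Real.zero_rpow (show β - 1 ≠ 0 by intro h; linarith [sub_eq_zero.mp h]),
          Real.norm_eq_abs]
      · have hrs' : r < s := lt_of_le_of_ne hr2 hrs
        have hsr : 0 < s - r := by linarith
        have hrt : 0 < r - tj := by linarith
        have hf'r : |f' r| ≤ M * (r - tj) ^ (-(β + ε)) := by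
          have h := hM r ⟨hr1, by linarith⟩
          have hpos : 0 < (r - tj) ^ (β + ε) := Real.rpow_pos_of_pos hrt _
          calc |f' r| ≤ M / (r - tj) ^ (β + ε) :=
                (le_div_iff₀ hpos).mpr (by nlinarith)
            _ = M * (r - tj) ^ (-(β + ε)) := by
                rw [Real.rpow_neg hrt.le, div_eq_mul_inv]
        have hMLb : |mittagLeffler β β (-lam * (s - r) ^ β)| ≤ C_E := by
          rw [show -lam * (s - r) ^ β = -(lam * (s - r) ^ β) by ring]
          exact hCEββ _ (by positivity)
        have ha : 0 ≤ (s - r) ^ (β - 1) := Real.rpow_nonneg hsr.le _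
        have hw : 0 ≤ (r - tj) ^ (-(β + ε)) := Real.rpow_nonneg hrt.le _
        rw [Real.norm_eq_abs, abs_mul, abs_mul, abs_of_nonneg ha]
        calc (s - r) ^ (β - 1) * |mittagLeffler β β (-lam * (s - r) ^ β)| * |f' r|
            ≤ (s - r) ^ (β - 1) * C_E * (M * (r - tj) ^ (-(β + ε))) := by
              refine mul_le_mul (mul_le_mul_of_nonneg_left hMLb ha) hf'r (abs_nonneg _) ?_
              positivity
          _ = (C_E * M) * ((r - tj) ^ (-(β + ε)) * (s - r) ^ (β - 1)) := by ring
    have hgint : IntervalIntegrable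
        (fun r => (C_E * M) * ((r - tj) ^ (-(β + ε)) * (s - r) ^ (β - 1))) volume tj s :=
      (intervalIntegrable_beta hs1 (by linarith) (by linarith)).const_mul _
    have hval : ∫ r in tj..s, (C_E * M) * ((r - tj) ^ (-(β + ε)) * (s - r) ^ (β - 1))
        = C_E * (M * betaFn (1 - β - ε) β * (s - tj) ^ (-ε)) := by
      rw [intervalIntegral.integral_const_mul, integral_beta_eval hs1,
        show -(β + ε) + (β - 1) + 1 = -ε by ring, hBeq]
      ring
    have hT2 : |∫ r in tj..s, (s - r) ^ (β - 1)
        * mittagLeffler β β (-lam * (s - r) ^ β) * f' r|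
        ≤ C_E * (M * betaFn (1 - β - ε) β * (s - tj) ^ (-ε)) := by
      have h := intervalIntegral.norm_integral_le_abs_of_norm_le hptwise hgint
      rw [Real.norm_eq_abs, hval] at h
      refine h.trans (le_of_eq (abs_of_nonneg ?_))
      exact mul_nonneg hCE (mul_nonneg (mul_nonneg hM0 hB0) (Real.rpow_nonneg hc.le _))
    rw [hv' s ⟨hs1, hs2⟩]
    refine (abs_add_le _ _).trans ?_
    have hring : (|f tj| + lam * |υ|) * (s - tj) ^ (β - 1) * C_E
        + C_E * (M * betaFn (1 - β - ε) β * (s - tj) ^ (-ε))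
        = C_E * ((|f tj| + lam * |υ|) * (s - tj) ^ (β - 1)
          + M * betaFn (1 - β - ε) β * (s - tj) ^ (-ε)) := by ring
    linarith [hT1, hT2]
  refine ⟨key, ?_⟩
  -- Part 2: integrability
  have hmlm : Measurable (mittagLeffler β β) := measurable_ml hβ0 hβ1.le hβ0
  set ν : Measure ℝ := volume.restrict (Set.Ioc tj tj1) with hν
  set H : ℝ × ℝ → ℝ := fun p =>
    (if p.2 ≤ p.1 then (p.1 - p.2) ^ (β - 1)
      * mittagLeffler β β (-lam * (p.1 - p.2) ^ β) else 0) * f' p.2 with hH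
  have hf'm : AEStronglyMeasurable f' ν := hf'.1.aestronglyMeasurable
  have hHm : AEStronglyMeasurable H ((volume.restrict (Set.Ioo tj tj1)).prod ν) := by
    apply AEStronglyMeasurable.mul
    · apply Measurable.aestronglyMeasurable
      apply Measurable.ite (measurableSet_le measurable_snd measurable_fst)
      · have hsub : Measurable fun p : ℝ × ℝ => p.1 - p.2 := measurable_fst.sub measurable_snd
        apply Measurable.mul
        · fun_prop
        · exact hmlm.comp (by fun_prop)
      · exact measurable_const
    · exact hf'm.comp_snd
  have hIm : AEStronglyMeasurable (fun s => ∫ r, H (s, r) ∂ν)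
      (volume.restrict (Set.Ioo tj tj1)) := hHm.integral_prod_right'
  have hGm : AEStronglyMeasurable
      (fun s => (f tj - lam * υ) * (s - tj) ^ (β - 1)
          * mittagLeffler β β (-lam * (s - tj) ^ β) + ∫ r, H (s, r) ∂ν)
      (volume.restrict (Set.Ioo tj tj1)) := by
    refine AEStronglyMeasurable.add ?_ hIm
    apply Measurable.aestronglyMeasurable
    apply Measurable.mul
    · fun_prop
    · exact hmlm.comp (by fun_prop)
  have h_eq : v' =ᵐ[volume.restrict (Set.Ioo tj tj1)]
      (fun s => (f tj - lam * υ) * (s - tj) ^ (β - 1)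
          * mittagLeffler β β (-lam * (s - tj) ^ β) + ∫ r, H (s, r) ∂ν) := by
    filter_upwards [ae_restrict_mem measurableSet_Ioo] with s hs
    rw [hv' s hs]
    congr 1
    have step1 : ∫ r, H (s, r) ∂ν
        = ∫ r in Set.Ioc tj tj1, (Set.Ioc tj s).indicator
            (fun r => (s - r) ^ (β - 1)
              * mittagLeffler β β (-lam * (s - r) ^ β) * f' r) r := by
      refine setIntegral_congr_fun measurableSet_Ioc fun r hr => ?_
      simp only [hH, Set.indicator_apply, Set.mem_Ioc, ite_mul, zero_mul]
      have : tj < r := hr.1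
      by_cases h : r ≤ s <;> simp [h, this]
    rw [step1, setIntegral_indicator measurableSet_Ioc,
      show Set.Ioc tj tj1 ∩ Set.Ioc tj s = Set.Ioc tj s by
        rw [Set.Ioc_inter_Ioc, max_self, min_eq_right hs.2.le],
      intervalIntegral.integral_of_le hs.1.le]
  have hAESM : AEStronglyMeasurable v' (volume.restrict (Set.Ioo tj tj1)) :=
    hGm.congr h_eq.symm
  set Gb : ℝ → ℝ := fun s => C_E * ((|f tj| + lam * |υ|) * (s - tj) ^ (β - 1)
    + M * betaFn (1 - β - ε) β * (s - tj) ^ (-ε)) with hGbdef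
  have hGb : IntervalIntegrable Gb volume tj tj1 := by
    have h1 : IntervalIntegrable (fun s => (s - tj) ^ (β - 1)) volume tj tj1 := by
      have := (intervalIntegrable_rpow' (by linarith : (-1:ℝ) < β - 1)
        (a := 0) (b := tj1 - tj)).comp_sub_right tj
      simpa using this
    have h2 : IntervalIntegrable (fun s => (s - tj) ^ (-ε)) volume tj tj1 := by
      have := (intervalIntegrable_rpow' (by linarith : (-1:ℝ) < -ε)
        (a := 0) (b := tj1 - tj)).comp_sub_right tj
      simpa using this
    exact ((h1.const_mul _).add (h2.const_mul _)).const_mul _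
  have hGbI : IntegrableOn Gb (Set.Ioo tj tj1) volume :=
    ((intervalIntegrable_iff_integrableOn_Ioc_of_le ht.le).mp hGb).mono_set
      Set.Ioo_subset_Ioc_self
  have hvb : ∀ᵐ s ∂(volume.restrict (Set.Ioo tj tj1)), ‖v' s‖ ≤ Gb s :=
    (ae_restrict_mem measurableSet_Ioo).mono fun s hs => by
      rw [Real.norm_eq_abs]; exact key s hs
  have hInt : IntegrableOn v' (Set.Ioo tj tj1) volume :=
    Integrable.mono' hGbI hAESM hvb
  rw [intervalIntegrable_iff_integrableOn_Ioc_of_le ht.le,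
    integrableOn_Ioc_iff_integrableOn_Ioo]
  exact hInt
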